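/- Let Π be a set and F a class of functions Π → [0,1]. Let Z be a finite set, μ a probability distribution on Z, and for each z ∈ Z let f_z ∈ F and let π_z ∈ Π be a maximizer of f_z over Π (assumed to exist). Let ρ_μ denote the law of π_z when z ∼ μ (the posterior-sampling distribution), and let f̄ : Π → [0,1] be arbitrary. Then for every γ ≥ e: E_{z∼μ} E_{π∼ρ_μ}[ f_z(π_z) − f_z(π) − γ·(f_z(π) − f̄(π))² ] ≤ inf_{Δ>0} { 2Δ + 12·θ({ f − f̄ : f ∈ F }, Δ, γ^{−1}; ρ_μ)·(log γ)²/γ } + (2γ)^{−1}, where z ∼ μ and π ∼ ρ_μ are independent. -/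

import Mathlib

open scoped Classical

/-- The scale-sensitive disagreement coefficient
`θ(G, Δ₀, ε₀; ρ)` where `ρ` is the law of `π z` for `z` drawn from the finitely
supported distribution `μ` on `Z`:
`max(1, sup{ (Δ²/ε²)·ρ({x : ∃ g ∈ G, |g x| > Δ ∧ E_{x'∼ρ}[g(x')²] ≤ ε²}) : Δ ≥ Δ₀, ε ≥ ε₀ })`. -/
noncomputable def disagreementCoef {X Z : Type*} [Fintype Z] (G : Set (X → ℝ))
    (Δ₀ ε₀ : ℝ) (μ : Z → ℝ) (π : Z → X) : ℝ :=
  max 1 (sSup {t : ℝ | ∃ Δ ε : ℝ, Δ₀ ≤ Δ ∧ ε₀ ≤ ε ∧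
    t = Δ ^ 2 / ε ^ 2 *
      ∑ z, if ∃ g ∈ G, Δ < |g (π z)| ∧ (∑ z', μ z' * g (π z') ^ 2) ≤ ε ^ 2
        then μ z else 0})

private lemma aux_step1 {X Z : Type*} [Fintype Z] (F : Set (X → ℝ)) (hF_mem : ∀ f ∈ F, ∀ x, f x ∈ Set.Icc (0 : ℝ) 1)
    (μ : Z → ℝ) (hμ_nonneg : ∀ z, 0 ≤ μ z) (hμ_sum : (∑ z, μ z) = 1)
    (f : Z → X → ℝ) (hf_mem : ∀ z, f z ∈ F) (π : Z → X)
    (fbar : X → ℝ) (γ : ℝ) (hγ0 : (0:ℝ) < γ) :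
    (∑ z, ∑ z', μ z * μ z' *
      (f z (π z) - f z (π z') - γ * (f z (π z') - fbar (π z')) ^ 2)) ≤
    (∑ z, μ z * ((f z (π z) - fbar (π z)) - γ / 2 * (∑ z', μ z' * (f z (π z') - fbar (π z')) ^ 2)))
      + (2 * γ)⁻¹ := by
  have hγne : γ ≠ 0 := ne_of_gt hγ0
  set c : ℝ := ∑ z', μ z' * fbar (π z') with hc
  have key : ∀ t : ℝ, 0 ≤ t + γ / 2 * t ^ 2 + (2 * γ)⁻¹ := by
    intro t
    have h : 0 ≤ γ / 2 * (t + γ⁻¹) ^ 2 := by positivity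
    have he : γ / 2 * (t + γ⁻¹) ^ 2 = γ / 2 * t ^ 2 + t + (2 * γ)⁻¹ := by
      field_simp; ring
    linarith [he ▸ h]
  have inner_le : ∀ z, (∑ z', μ z' * (f z (π z) - f z (π z') - γ * (f z (π z') - fbar (π z')) ^ 2))
      ≤ f z (π z) - c - γ / 2 * (∑ z', μ z' * (f z (π z') - fbar (π z')) ^ 2) + (2 * γ)⁻¹ := by
    intro z
    have hpt : ∀ z' : Z, μ z' * (f z (π z) - f z (π z') - γ * (f z (π z') - fbar (π z')) ^ 2)
        ≤ μ z' * (f z (π z) - fbar (π z') - γ / 2 * (f z (π z') - fbar (π z')) ^ 2 + (2 * γ)⁻¹) := by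
      intro z'
      refine mul_le_mul_of_nonneg_left ?_ (hμ_nonneg z')
      have := key (f z (π z') - fbar (π z'))
      nlinarith [this]
    calc (∑ z', μ z' * (f z (π z) - f z (π z') - γ * (f z (π z') - fbar (π z')) ^ 2))
        ≤ ∑ z', μ z' * (f z (π z) - fbar (π z') - γ / 2 * (f z (π z') - fbar (π z')) ^ 2 + (2 * γ)⁻¹) :=
          Finset.sum_le_sum fun z' _ => hpt z'
      _ = ∑ z', (f z (π z) * μ z' + (2 * γ)⁻¹ * μ z' - μ z' * fbar (π z')
            - γ / 2 * (μ z' * (f z (π z') - fbar (π z')) ^ 2)) :=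
          Finset.sum_congr rfl fun z' _ => by ring
      _ = f z (π z) * (∑ z', μ z') + (2 * γ)⁻¹ * (∑ z', μ z') - (∑ z', μ z' * fbar (π z'))
            - γ / 2 * (∑ z', μ z' * (f z (π z') - fbar (π z')) ^ 2) := by
          rw [Finset.sum_sub_distrib, Finset.sum_sub_distrib, Finset.sum_add_distrib,
            ← Finset.mul_sum, ← Finset.mul_sum, ← Finset.mul_sum]
      _ = f z (π z) - c - γ / 2 * (∑ z', μ z' * (f z (π z') - fbar (π z')) ^ 2) + (2 * γ)⁻¹ := by
          rw [hμ_sum]; ring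
  calc (∑ z, ∑ z', μ z * μ z' *
      (f z (π z) - f z (π z') - γ * (f z (π z') - fbar (π z')) ^ 2))
      = ∑ z, μ z * (∑ z', μ z' * (f z (π z) - f z (π z') - γ * (f z (π z') - fbar (π z')) ^ 2)) := by
        refine Finset.sum_congr rfl fun z _ => ?_
        rw [Finset.mul_sum]
        exact Finset.sum_congr rfl fun z' _ => by ring
    _ ≤ ∑ z, μ z * (f z (π z) - c - γ / 2 * (∑ z', μ z' * (f z (π z') - fbar (π z')) ^ 2) + (2 * γ)⁻¹) :=
        Finset.sum_le_sum fun z _ => mul_le_mul_of_nonneg_left (inner_le z) (hμ_nonneg z)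
    _ = ∑ z, (μ z * ((f z (π z) - fbar (π z)) - γ / 2 * (∑ z', μ z' * (f z (π z') - fbar (π z')) ^ 2))
          + (μ z * fbar (π z) - c * μ z) + (2 * γ)⁻¹ * μ z) :=
        Finset.sum_congr rfl fun z _ => by ring
    _ = (∑ z, μ z * ((f z (π z) - fbar (π z)) - γ / 2 * (∑ z', μ z' * (f z (π z') - fbar (π z')) ^ 2)))
          + ((∑ z, μ z * fbar (π z)) - c * (∑ z, μ z)) + (2 * γ)⁻¹ * (∑ z, μ z) := by
        rw [Finset.sum_add_distrib, Finset.sum_add_distrib, Finset.sum_sub_distrib,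
          ← Finset.mul_sum, ← Finset.mul_sum]
    _ = _ := by rw [hμ_sum]; simp only [hc]; ring

set_option maxHeartbeats 1000000 in
private lemma aux_step2 {X Z : Type*} [Fintype Z] (F : Set (X → ℝ)) (hF_mem : ∀ f ∈ F, ∀ x, f x ∈ Set.Icc (0 : ℝ) 1)
    (μ : Z → ℝ) (hμ_nonneg : ∀ z, 0 ≤ μ z) (hμ_sum : (∑ z, μ z) = 1)
    (f : Z → X → ℝ) (hf_mem : ∀ z, f z ∈ F) (π : Z → X)
    (fbar : X → ℝ) (hfbar_mem : ∀ x, fbar x ∈ Set.Icc (0 : ℝ) 1)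
    (γ : ℝ) (hγ : Real.exp 1 ≤ γ) (Δ : ℝ) (hΔ : 0 < Δ) :
    (∑ z, μ z * ((f z (π z) - fbar (π z))
        - γ / 2 * (∑ z', μ z' * (f z (π z') - fbar (π z')) ^ 2)))
      ≤ 2 * Δ + 12 * disagreementCoef ((fun g => g - fbar) '' F) Δ γ⁻¹ μ π
          * Real.log γ ^ 2 / γ := by
  have hγ0 : (0:ℝ) < γ := lt_of_lt_of_le (Real.exp_pos 1) hγ
  have hγne : γ ≠ 0 := ne_of_gt hγ0
  have hL1 : (1:ℝ) ≤ Real.log γ := by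
    have h := Real.log_le_log (Real.exp_pos 1) hγ
    rwa [Real.log_exp] at h
  have hexp1 : (2:ℝ) < Real.exp 1 := by nlinarith [Real.exp_one_gt_d9]
  set L := Real.log γ with hLdef
  set G : Set (X → ℝ) := (fun g => g - fbar) '' F with hG
  have hmemG : ∀ z, f z - fbar ∈ G := fun z => ⟨f z, hf_mem z, rfl⟩
  have hGbd : ∀ g ∈ G, ∀ x, |g x| ≤ 1 := by
    rintro g ⟨f', hf', rfl⟩ x
    have h1 := (hF_mem f' hf' x)
    have h2 := hfbar_mem x
    simp only [Pi.sub_apply]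
    rw [abs_le]
    constructor <;> [linarith [h1.1, h2.2]; linarith [h1.2, h2.1]]
  set v : Z → ℝ := fun z => f z (π z) - fbar (π z) with hv
  set e2 : Z → ℝ := fun z => ∑ z', μ z' * (f z (π z') - fbar (π z')) ^ 2 with he2
  have hv_eq : ∀ z, v z = f z (π z) - fbar (π z) := fun z => rfl
  have he2_eq : ∀ z, e2 z = ∑ z', μ z' * (f z (π z') - fbar (π z')) ^ 2 := fun z => rfl
  have he2_nonneg : ∀ z, 0 ≤ e2 z := fun z =>
    Finset.sum_nonneg fun z' _ => mul_nonneg (hμ_nonneg z') (sq_nonneg _)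
  have hv_le1 : ∀ z, v z ≤ 1 := fun z => by
    have h1 := (hF_mem (f z) (hf_mem z) (π z)).2
    have h2 := (hfbar_mem (π z)).1
    rw [hv_eq]; linarith
  set θ := disagreementCoef G Δ γ⁻¹ μ π with hθdef
  have hθ1 : (1:ℝ) ≤ θ := le_max_left _ _
  have hbdd : BddAbove {t : ℝ | ∃ D ε : ℝ, Δ ≤ D ∧ γ⁻¹ ≤ ε ∧
      t = D ^ 2 / ε ^ 2 *
        ∑ z, if ∃ g ∈ G, D < |g (π z)| ∧ (∑ z', μ z' * g (π z') ^ 2) ≤ ε ^ 2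
          then μ z else 0} := by
    refine ⟨γ ^ 2, ?_⟩
    rintro t ⟨D, ε, hD, hε, rfl⟩
    have hε0 : (0:ℝ) < ε := lt_of_lt_of_le (inv_pos.mpr hγ0) hε
    by_cases hD1 : 1 < D
    · have hzero : (∑ z, if ∃ g ∈ G, D < |g (π z)| ∧ (∑ z', μ z' * g (π z') ^ 2) ≤ ε ^ 2
          then μ z else 0) = 0 := by
        refine Finset.sum_eq_zero fun z _ => ?_
        rw [if_neg]
        rintro ⟨g, hgG, hgD, -⟩
        have := hGbd g hgG (π z)
        linarith
      rw [hzero, mul_zero]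
      positivity
    · push_neg at hD1
      have hsum_le : (∑ z, if ∃ g ∈ G, D < |g (π z)| ∧ (∑ z', μ z' * g (π z') ^ 2) ≤ ε ^ 2
          then μ z else 0) ≤ 1 := by
        rw [← hμ_sum]
        refine Finset.sum_le_sum fun z _ => ?_
        split <;> [exact le_rfl; exact hμ_nonneg z]
      have hsum0 : (0:ℝ) ≤ (∑ z, if ∃ g ∈ G, D < |g (π z)| ∧ (∑ z', μ z' * g (π z') ^ 2) ≤ ε ^ 2
          then μ z else 0) :=
        Finset.sum_nonneg fun z _ => by split <;> [exact hμ_nonneg z; exact le_rfl]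
      have h1 : D ^ 2 / ε ^ 2 ≤ γ ^ 2 := by
        have hD2 : D ^ 2 ≤ 1 := by nlinarith
        have hε2 : γ⁻¹ ^ 2 ≤ ε ^ 2 := by
          have h3 : (0:ℝ) ≤ γ⁻¹ := inv_nonneg.mpr hγ0.le
          nlinarith
        have hinv2 : (0:ℝ) < γ⁻¹ ^ 2 := pow_pos (inv_pos.mpr hγ0) 2
        calc D ^ 2 / ε ^ 2 ≤ 1 / γ⁻¹ ^ 2 :=
              div_le_div₀ zero_le_one hD2 hinv2 hε2
          _ = γ ^ 2 := by rw [one_div, ← inv_pow, inv_inv]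
      calc D ^ 2 / ε ^ 2 * _ ≤ D ^ 2 / ε ^ 2 * 1 :=
            mul_le_mul_of_nonneg_left hsum_le (by positivity)
        _ = D ^ 2 / ε ^ 2 := mul_one _
        _ ≤ γ ^ 2 := h1
  have hθkey : ∀ D ε : ℝ, Δ ≤ D → γ⁻¹ ≤ ε →
      D ^ 2 / ε ^ 2 *
        (∑ z, if ∃ g ∈ G, D < |g (π z)| ∧ (∑ z', μ z' * g (π z') ^ 2) ≤ ε ^ 2
          then μ z else 0) ≤ θ := by
    intro D ε hD hε
    rw [hθdef]
    unfold disagreementCoef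
    exact le_max_of_le_right (le_csSup hbdd ⟨D, ε, hD, hε, rfl⟩)
  clear_value v e2 θ G
  set a : ℝ := 2 * Δ + Real.exp 1 / γ with ha
  have ha_pos : 0 < a := by
    have h9 := div_pos (Real.exp_pos 1) hγ0
    rw [ha]; linarith
  have ha_ge : Real.exp 1 / γ ≤ a := by rw [ha]; linarith
  have ha_geΔ : 2 * Δ ≤ a := by
    have h9 := div_pos (Real.exp_pos 1) hγ0
    rw [ha]; linarith
  set N : ℕ := ⌈Real.logb 2 (γ / Real.exp 1)⌉₊ with hN
  have hx_nonneg : 0 ≤ Real.logb 2 (γ / Real.exp 1) := by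
    apply Real.logb_nonneg one_lt_two
    rw [le_div_iff₀ (Real.exp_pos 1), one_mul]
    exact hγ
  have h2N : γ / Real.exp 1 ≤ (2:ℝ) ^ N := by
    have h1 : (0:ℝ) < γ / Real.exp 1 := by positivity
    have h2 : γ / Real.exp 1 = (2:ℝ) ^ (Real.logb 2 (γ / Real.exp 1)) :=
      (Real.rpow_logb two_pos (by norm_num) h1).symm
    rw [h2, ← Real.rpow_natCast 2 N]
    exact Real.rpow_le_rpow_of_exponent_le one_le_two (Nat.le_ceil _)
  have hNle : (N : ℝ) ≤ (L - 1) / Real.log 2 + 1 := by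
    have h1 : (N : ℝ) < Real.logb 2 (γ / Real.exp 1) + 1 := Nat.ceil_lt_add_one hx_nonneg
    have h2 : Real.logb 2 (γ / Real.exp 1) = (L - 1) / Real.log 2 := by
      rw [Real.logb, Real.log_div hγne (Real.exp_ne_zero 1), Real.log_exp, hLdef]
    linarith [h2 ▸ h1]
  clear_value N
  have h2Na : (1:ℝ) ≤ (2:ℝ) ^ N * a := by
    calc (1:ℝ) = (γ / Real.exp 1) * (Real.exp 1 / γ) := by field_simp
      _ ≤ (2:ℝ) ^ N * a :=
        mul_le_mul h2N ha_ge (div_pos (Real.exp_pos 1) hγ0).le (by positivity)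
  clear_value a
  have hpt : ∀ z, μ z * (v z - γ / 2 * e2 z) ≤ μ z * a +
      ∑ k ∈ Finset.range N, (if (2:ℝ) ^ k * a < v z ∧ v z ≤ (2:ℝ) ^ (k+1) * a ∧ γ * e2 z ≤ 2 * v z
        then μ z * v z else 0) := by
    intro z
    have hterm_nonneg : ∀ k ∈ Finset.range N,
        (0:ℝ) ≤ (if (2:ℝ) ^ k * a < v z ∧ v z ≤ (2:ℝ) ^ (k+1) * a ∧ γ * e2 z ≤ 2 * v z
          then μ z * v z else 0) := by
      intro k _
      split
      next h =>
        have h0 : (0:ℝ) < (2:ℝ) ^ k * a := mul_pos (by positivity) ha_pos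
        exact mul_nonneg (hμ_nonneg z) (le_of_lt (lt_trans h0 h.1))
      next => exact le_rfl
    have hee : (0:ℝ) ≤ γ / 2 * e2 z := mul_nonneg (by linarith) (he2_nonneg z)
    by_cases hsmall : v z - γ / 2 * e2 z ≤ a
    · have h1 : μ z * (v z - γ / 2 * e2 z) ≤ μ z * a :=
        mul_le_mul_of_nonneg_left hsmall (hμ_nonneg z)
      linarith [Finset.sum_nonneg hterm_nonneg]
    · push_neg at hsmall
      have hva : a < v z := by linarith
      have hge2 : γ * e2 z ≤ 2 * v z := by
        have hh : γ * e2 z = 2 * (γ / 2 * e2 z) := by ring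
        linarith
      have hP0 : (2:ℝ) ^ (0:ℕ) * a < v z := by rw [pow_zero, one_mul]; exact hva
      have hPN : ¬ ((2:ℝ) ^ N * a < v z) := by
        push_neg
        calc v z ≤ 1 := hv_le1 z
          _ ≤ (2:ℝ) ^ N * a := h2Na
      obtain ⟨k, hkN', hPk, hPk1⟩ :
          ∃ k : ℕ, k < N ∧ (2:ℝ) ^ k * a < v z ∧ ¬ ((2:ℝ) ^ (k+1) * a < v z) := by
        classical
        set P : ℕ → Prop := fun k => (2:ℝ) ^ k * a < v z with hP
        have hp0 : P 0 := hP0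
        have hpn : ¬ P N := hPN
        refine ⟨Nat.findGreatest P N, ?_, ?_, ?_⟩
        · exact lt_of_le_of_ne (Nat.findGreatest_le N)
            (fun h => hpn (h ▸ Nat.findGreatest_spec (Nat.zero_le N) hp0))
        · exact Nat.findGreatest_spec (Nat.zero_le N) hp0
        · intro hcon
          have hkN : Nat.findGreatest P N < N := lt_of_le_of_ne (Nat.findGreatest_le N)
            (fun h => hpn (h ▸ Nat.findGreatest_spec (Nat.zero_le N) hp0))
          exact Nat.findGreatest_is_greatest (Nat.lt_succ_self _) hkN hcon
      have hvk : v z ≤ (2:ℝ) ^ (k+1) * a := not_lt.mp hPk1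
      have hsingle : μ z * v z ≤
          ∑ k' ∈ Finset.range N, (if (2:ℝ) ^ k' * a < v z ∧ v z ≤ (2:ℝ) ^ (k'+1) * a ∧ γ * e2 z ≤ 2 * v z
            then μ z * v z else 0) := by
        have h := Finset.single_le_sum hterm_nonneg (Finset.mem_range.mpr hkN')
        rwa [if_pos ⟨hPk, hvk, hge2⟩] at h
      have h1 : μ z * (v z - γ / 2 * e2 z) ≤ μ z * v z :=
        mul_le_mul_of_nonneg_left (by linarith) (hμ_nonneg z)
      have h2 : (0:ℝ) ≤ μ z * a := mul_nonneg (hμ_nonneg z) ha_pos.le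
      linarith
  have hbucket : ∀ k : ℕ,
      (∑ z, if (2:ℝ) ^ k * a < v z ∧ v z ≤ (2:ℝ) ^ (k+1) * a ∧ γ * e2 z ≤ 2 * v z
        then μ z * v z else 0) ≤ 8 * θ / γ := by
    intro k
    have hD0 : (0:ℝ) < (2:ℝ) ^ k * a := mul_pos (by positivity) ha_pos
    obtain ⟨D, hD, hD0⟩ : ∃ D : ℝ, D = (2:ℝ) ^ k * a ∧ 0 < D := ⟨_, rfl, hD0⟩
    have hDne : D ≠ 0 := ne_of_gt hD0
    have haD : a ≤ D := by
      rw [hD]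
      calc a = 1 * a := (one_mul a).symm
        _ ≤ (2:ℝ) ^ k * a :=
          mul_le_mul_of_nonneg_right (one_le_pow₀ one_le_two) ha_pos.le
    have hΔD : Δ ≤ D := by linarith
    have heD : Real.exp 1 / γ ≤ D := le_trans ha_ge haD
    obtain ⟨ε, hε2, hε0⟩ : ∃ ε : ℝ, ε ^ 2 = 4 * D / γ ∧ 0 < ε := by
      refine ⟨Real.sqrt (4 * D / γ), Real.sq_sqrt (by positivity), Real.sqrt_pos.mpr (by positivity)⟩
    have hεγ : γ⁻¹ ≤ ε := by
      have heD' : Real.exp 1 ≤ D * γ := (div_le_iff₀ hγ0).mp heD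
      have h1 : γ⁻¹ ^ 2 ≤ ε ^ 2 := by
        rw [hε2, inv_pow, inv_eq_one_div, div_le_div_iff₀ (by positivity) hγ0]
        nlinarith [mul_le_mul_of_nonneg_right heD' hγ0.le]
      nlinarith [inv_pos.mpr hγ0]
    have hεne : ε ≠ 0 := ne_of_gt hε0
    have hv2D : (2:ℝ) ^ (k+1) * a = 2 * D := by rw [hD, pow_succ]; ring
    have hSEb : (∑ z, if ∃ g ∈ G, D < |g (π z)| ∧ (∑ z', μ z' * g (π z') ^ 2) ≤ ε ^ 2
        then μ z else 0) ≤ θ * (ε ^ 2 / D ^ 2) := by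
      have h := hθkey D ε hΔD hεγ
      have h5 : (∑ z, if ∃ g ∈ G, D < |g (π z)| ∧ (∑ z', μ z' * g (π z') ^ 2) ≤ ε ^ 2
          then μ z else 0) = (ε ^ 2 / D ^ 2) * (D ^ 2 / ε ^ 2 *
          (∑ z, if ∃ g ∈ G, D < |g (π z)| ∧ (∑ z', μ z' * g (π z') ^ 2) ≤ ε ^ 2
            then μ z else 0)) := by
        field_simp
      rw [h5]
      calc (ε ^ 2 / D ^ 2) * _ ≤ (ε ^ 2 / D ^ 2) * θ :=
          mul_le_mul_of_nonneg_left h (by positivity)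
        _ = θ * (ε ^ 2 / D ^ 2) := mul_comm _ _
    calc (∑ z, if (2:ℝ) ^ k * a < v z ∧ v z ≤ (2:ℝ) ^ (k+1) * a ∧ γ * e2 z ≤ 2 * v z
          then μ z * v z else 0)
        ≤ ∑ z, (2 * D) * (if ∃ g ∈ G, D < |g (π z)| ∧ (∑ z', μ z' * g (π z') ^ 2) ≤ ε ^ 2
            then μ z else 0) := by
          refine Finset.sum_le_sum fun z _ => ?_
          by_cases hB : (2:ℝ) ^ k * a < v z ∧ v z ≤ (2:ℝ) ^ (k+1) * a ∧ γ * e2 z ≤ 2 * v z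
          · rw [if_pos hB]
            obtain ⟨hB1, hB2, hB3⟩ := hB
            rw [hv2D] at hB2
            rw [← hD] at hB1
            have hcond : ∃ g ∈ G, D < |g (π z)| ∧ (∑ z', μ z' * g (π z') ^ 2) ≤ ε ^ 2 := by
              refine ⟨f z - fbar, hmemG z, ?_, ?_⟩
              · simp only [Pi.sub_apply]
                rw [← hv_eq]
                exact lt_of_lt_of_le hB1 (le_abs_self _)
              · have he2le : e2 z ≤ 4 * D / γ := by
                  rw [le_div_iff₀ hγ0]
                  nlinarith
                calc (∑ z', μ z' * (f z - fbar) (π z') ^ 2) = e2 z := by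
                      simp only [Pi.sub_apply]
                      rw [he2_eq]
                  _ ≤ 4 * D / γ := he2le
                  _ = ε ^ 2 := hε2.symm
            rw [if_pos hcond]
            calc μ z * v z ≤ μ z * (2 * D) := mul_le_mul_of_nonneg_left hB2 (hμ_nonneg z)
              _ = 2 * D * μ z := by ring
          · rw [if_neg hB]
            split
            next => exact mul_nonneg (by linarith) (hμ_nonneg z)
            next => simp
      _ = (2 * D) * (∑ z, if ∃ g ∈ G, D < |g (π z)| ∧ (∑ z', μ z' * g (π z') ^ 2) ≤ ε ^ 2
            then μ z else 0) := by rw [Finset.mul_sum]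
      _ ≤ (2 * D) * (θ * (ε ^ 2 / D ^ 2)) :=
          mul_le_mul_of_nonneg_left hSEb (by linarith)
      _ = 8 * θ / γ := by rw [hε2]; field_simp; ring
  have hfinal : (∑ z, μ z * (v z - γ / 2 * e2 z)) ≤ a + (N:ℝ) * (8 * θ / γ) := by
    calc (∑ z, μ z * (v z - γ / 2 * e2 z))
        ≤ ∑ z, (μ z * a +
            ∑ k ∈ Finset.range N, (if (2:ℝ) ^ k * a < v z ∧ v z ≤ (2:ℝ) ^ (k+1) * a ∧ γ * e2 z ≤ 2 * v z
              then μ z * v z else 0)) := Finset.sum_le_sum fun z _ => hpt z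
      _ = (∑ z, μ z * a) + ∑ z, ∑ k ∈ Finset.range N,
            (if (2:ℝ) ^ k * a < v z ∧ v z ≤ (2:ℝ) ^ (k+1) * a ∧ γ * e2 z ≤ 2 * v z
              then μ z * v z else 0) := Finset.sum_add_distrib
      _ = a + ∑ k ∈ Finset.range N, ∑ z,
            (if (2:ℝ) ^ k * a < v z ∧ v z ≤ (2:ℝ) ^ (k+1) * a ∧ γ * e2 z ≤ 2 * v z
              then μ z * v z else 0) := by
            rw [← Finset.sum_mul, hμ_sum, one_mul, Finset.sum_comm]
      _ ≤ a + ∑ k ∈ Finset.range N, (8 * θ / γ) := by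
            gcongr with k hk
            exact hbucket k
      _ = a + (N:ℝ) * (8 * θ / γ) := by
            rw [Finset.sum_const, Finset.card_range, nsmul_eq_mul]
  have hnum : Real.exp 1 + 8 * (N:ℝ) ≤ 12 * L ^ 2 := by
    have hlog2 : (0:ℝ) < Real.log 2 := Real.log_pos one_lt_two
    have hdivle : (L - 1) / Real.log 2 ≤ (3 / 2) * (L - 1) := by
      rw [div_le_iff₀ hlog2]
      nlinarith [Real.log_two_gt_d9, hL1]
    have h8N : 8 * (N:ℝ) ≤ 12 * (L - 1) + 8 := by linarith
    nlinarith [Real.exp_one_lt_d9, hL1,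
      mul_nonneg (by linarith : (0:ℝ) ≤ L) (by linarith : (0:ℝ) ≤ L - 1)]
  have hN0 : (0:ℝ) ≤ (N:ℝ) := Nat.cast_nonneg N
  have hθ0 : (0:ℝ) ≤ θ := le_trans zero_le_one hθ1
  have hgoal : (∑ z, μ z * ((f z (π z) - fbar (π z))
      - γ / 2 * (∑ z', μ z' * (f z (π z') - fbar (π z')) ^ 2)))
      = ∑ z, μ z * (v z - γ / 2 * e2 z) :=
    Finset.sum_congr rfl fun z _ => by rw [hv_eq, he2_eq]
  rw [hgoal]
  calc (∑ z, μ z * (v z - γ / 2 * e2 z)) ≤ a + (N:ℝ) * (8 * θ / γ) := hfinal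
    _ = 2 * Δ + (Real.exp 1 + 8 * (N:ℝ) * θ) / γ := by rw [ha]; ring
    _ ≤ 2 * Δ + ((Real.exp 1 + 8 * (N:ℝ)) * θ) / γ := by
        have h : Real.exp 1 + 8 * (N:ℝ) * θ ≤ (Real.exp 1 + 8 * (N:ℝ)) * θ := by
          nlinarith [Real.exp_pos 1]
        gcongr
    _ ≤ 2 * Δ + (12 * L ^ 2 * θ) / γ := by gcongr
    _ = 2 * Δ + 12 * θ * L ^ 2 / γ := by ring

/-- bound on the dual (Bayesian) squared-error Decision-Estimation
Coefficient via posterior sampling in terms of the disagreement coefficient.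
Here `f z` is the mean-reward function of a model drawn from the prior `μ`,
`π z` its optimal decision, `ρ_μ` (the posterior-sampling distribution) is the
law of `π z` under `z ∼ μ`, and `fbar` is an arbitrary reference mean-reward
function. -/
theorem posterior_sampling_disagreement_bound {X Z : Type*} [Fintype Z]
    (F : Set (X → ℝ)) (hF_mem : ∀ f ∈ F, ∀ x, f x ∈ Set.Icc (0 : ℝ) 1)
    (μ : Z → ℝ) (hμ_nonneg : ∀ z, 0 ≤ μ z) (hμ_sum : (∑ z, μ z) = 1)
    (f : Z → X → ℝ) (hf_mem : ∀ z, f z ∈ F) (π : Z → X)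
    (h_max : ∀ z x, f z x ≤ f z (π z))
    (fbar : X → ℝ) (hfbar_mem : ∀ x, fbar x ∈ Set.Icc (0 : ℝ) 1)
    (γ : ℝ) (hγ : Real.exp 1 ≤ γ) :
    (∑ z, ∑ z', μ z * μ z' *
        (f z (π z) - f z (π z') - γ * (f z (π z') - fbar (π z')) ^ 2)) ≤
      (⨅ Δ : {Δ : ℝ // 0 < Δ},
        (2 * Δ.1 + 12 * disagreementCoef ((fun g => g - fbar) '' F) Δ.1 γ⁻¹ μ π *
          Real.log γ ^ 2 / γ)) + (2 * γ)⁻¹ := by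
  have hγ0 : (0:ℝ) < γ := lt_of_lt_of_le (Real.exp_pos 1) hγ
  have step1 := aux_step1 F hF_mem μ hμ_nonneg hμ_sum f hf_mem π fbar γ hγ0
  haveI : Nonempty {Δ : ℝ // 0 < Δ} := ⟨⟨1, one_pos⟩⟩
  have hinf : (∑ z, μ z * ((f z (π z) - fbar (π z))
        - γ / 2 * (∑ z', μ z' * (f z (π z') - fbar (π z')) ^ 2)))
      ≤ ⨅ Δ : {Δ : ℝ // 0 < Δ},
        (2 * Δ.1 + 12 * disagreementCoef ((fun g => g - fbar) '' F) Δ.1 γ⁻¹ μ π *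
          Real.log γ ^ 2 / γ) :=
    le_ciInf fun Δ =>
      aux_step2 F hF_mem μ hμ_nonneg hμ_sum f hf_mem π fbar hfbar_mem γ hγ Δ.1 Δ.2
  linarith
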